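/- Let $g_j(x)$ be the characteristic polynomial of the tridiagonal 0-1 matrix $K_j$. For positive integers $k < \ell$, $g_k(x)$ divides $g_\ell(x)$ in $\mathbb{Q}[x]$ if and only if $(k+1) \mid (\ell+1)$. -/

import Mathlib

open Polynomial

def Kmat (j : ℕ) : Matrix (Fin j) (Fin j) ℚ :=
  Matrix.of fun i k =>
    if (i : ℕ) + 1 = (k : ℕ) then 1 else if (k : ℕ) + 1 = (i : ℕ) then 1 else 0

noncomputable def Spoly : ℕ → ℚ[X]
  | 0 => 1
  | 1 => X
  | (n+2) => X * Spoly (n+1) - Spoly n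

lemma Spoly_monic (n : ℕ) : (Spoly n).Monic ∧ (Spoly n).natDegree = n := by
  induction n using Nat.strong_induction_on with
  | _ n ih =>
    match n with
    | 0 => simp [Spoly, monic_one]
    | 1 => simp [Spoly, monic_X]
    | (n+2) =>
      obtain ⟨h1, d1⟩ := ih (n+1) (by omega)
      obtain ⟨h0, d0⟩ := ih n (by omega)
      have hm : (X * Spoly (n+1)).Monic := (monic_X.mul h1)
      have hd : (X * Spoly (n+1)).natDegree = n + 2 := by
        rw [natDegree_mul X_ne_zero h1.ne_zero, natDegree_X, d1]; ring
      have hlt : (Spoly n).degree < (X * Spoly (n+1)).degree := by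
        rw [degree_eq_natDegree h0.ne_zero, degree_eq_natDegree hm.ne_zero, d0, hd]
        exact_mod_cast by omega
      constructor
      · rw [Spoly, sub_eq_add_neg]
        exact hm.add_of_left (by simpa using hlt)
      · rw [Spoly, ← hd]
        exact natDegree_sub_eq_left_of_natDegree_lt (by rw [d0, hd]; omega)

lemma Spoly_ne_zero (n : ℕ) : Spoly n ≠ 0 := (Spoly_monic n).1.ne_zero

lemma Spoly_coprime (n : ℕ) : IsCoprime (Spoly (n+1)) (Spoly n) := by
  induction n with
  | zero => simpa [Spoly] using isCoprime_one_right
  | succ n ih =>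
    have : Spoly (n+2) = X * Spoly (n+1) - Spoly n := rfl
    rw [this, sub_eq_add_neg, add_comm]
    exact ih.symm.neg_left.add_mul_right_left X

lemma Spoly_add (m n : ℕ) :
    Spoly (m + n + 2) = Spoly (m+1) * Spoly (n+1) - Spoly m * Spoly n := by
  induction n using Nat.strong_induction_on generalizing m with
  | _ n ih =>
    match n with
    | 0 =>
      show Spoly (m + 2) = _
      rw [show Spoly (m+2) = X * Spoly (m+1) - Spoly m from rfl]
      simp [Spoly]; ring
    | 1 =>
      have h3 : Spoly (m+3) = X * Spoly (m+2) - Spoly (m+1) := rfl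
      have h2 : Spoly (m+2) = X * Spoly (m+1) - Spoly m := rfl
      have hS2 : Spoly 2 = X * X - 1 := by
        rw [show Spoly 2 = X * Spoly 1 - Spoly 0 from rfl]; simp [Spoly]
      show Spoly (m+3) = _
      rw [h3, h2, hS2]; simp [Spoly]; ring
    | (n+2) =>
      have e1 := ih (n+1) (by omega) m
      have e0 := ih n (by omega) m
      have h4 : Spoly (m + (n+2) + 2) = X * Spoly (m + n + 3) - Spoly (m + n + 2) := by
        rw [show m + (n+2) + 2 = (m + n + 2) + 2 by ring]; rfl
      rw [h4, show m + n + 3 = m + (n+1) + 2 by ring, e1, e0,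
        show Spoly (n+3) = X * Spoly (n+2) - Spoly (n+1) from rfl,
        show Spoly (n+2) = X * Spoly (n+1) - Spoly n from rfl]
      ring

lemma Kmat_succ (n : ℕ) (i j : Fin n) : Kmat (n+1) i.succ j.succ = Kmat n i j := by
  simp only [Kmat, Matrix.of_apply, Fin.val_succ]
  split_ifs <;> first | rfl | omega | simp_all

lemma charK_sub (n : ℕ) :
    (Matrix.charmatrix (Kmat (n+1))).submatrix Fin.succ Fin.succ
      = Matrix.charmatrix (Kmat n) := by
  ext i j
  rcases eq_or_ne i j with rfl | h
  · rw [Matrix.submatrix_apply, Matrix.charmatrix_apply_eq, Matrix.charmatrix_apply_eq, Kmat_succ]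
  · rw [Matrix.submatrix_apply,
      Matrix.charmatrix_apply_ne _ _ _ (by simpa [Fin.succ_inj] using h),
      Matrix.charmatrix_apply_ne _ _ _ h, Kmat_succ]

lemma charpoly_Kmat (n : ℕ) : (Kmat n).charpoly = Spoly n := by
  induction n using Nat.strong_induction_on with
  | _ n ih =>
    match n with
    | 0 => simp [Matrix.charpoly, Matrix.det_fin_zero, Spoly]
    | 1 => simp [Matrix.charpoly, Matrix.det_fin_one, Kmat, Spoly]
    | (n+2) =>
      show (Matrix.charmatrix (Kmat (n+2))).det = Spoly (n+2)
      set A := Matrix.charmatrix (Kmat (n+2)) with hA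
      have hrow0 : ∀ j : Fin n, A 0 j.succ.succ = 0 := by
        intro j
        rw [hA, Matrix.charmatrix_apply_ne _ _ _ (by simp [Fin.ext_iff])]
        have : Kmat (n+2) 0 j.succ.succ = 0 := by
          simp only [Kmat, Matrix.of_apply, Fin.val_succ, Fin.val_zero]
          split_ifs <;> first | rfl | omega | simp_all
        rw [this, map_zero, neg_zero]
      have hA00 : A 0 0 = X := by
        rw [hA, Matrix.charmatrix_apply_eq]
        have : Kmat (n+2) 0 0 = 0 := by simp [Kmat]
        rw [this, map_zero, sub_zero]
      have hA01 : A 0 1 = -1 := by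
        rw [hA, Matrix.charmatrix_apply_ne _ _ _ (by simp [Fin.ext_iff])]
        have : Kmat (n+2) 0 1 = 1 := by simp [Kmat]
        rw [this, map_one]
      have hA10 : A 1 0 = -1 := by
        rw [hA, Matrix.charmatrix_apply_ne _ _ _ (by simp [Fin.ext_iff])]
        have : Kmat (n+2) 1 0 = 1 := by simp [Kmat]
        rw [this, map_one]
      have hsub1 : A.submatrix Fin.succ Fin.succ = Matrix.charmatrix (Kmat (n+1)) := by
        rw [hA]; exact charK_sub (n+1)
      set B := A.submatrix Fin.succ ((1 : Fin (n+2)).succAbove) with hB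
      have hBcol : ∀ i : Fin n, B i.succ 0 = 0 := by
        intro i
        rw [hB, Matrix.submatrix_apply, show (1 : Fin (n+2)).succAbove 0 = 0 by
            rw [Fin.succAbove_of_castSucc_lt] <;> simp]
        rw [hA, Matrix.charmatrix_apply_ne _ _ _ (by simp [Fin.ext_iff])]
        have : Kmat (n+2) i.succ.succ 0 = 0 := by
          simp only [Kmat, Matrix.of_apply, Fin.val_succ, Fin.val_zero]
          split_ifs <;> first | rfl | omega | simp_all
        rw [this, map_zero, neg_zero]
      have hB00 : B 0 0 = -1 := by
        rw [hB, Matrix.submatrix_apply, show (1 : Fin (n+2)).succAbove 0 = 0 by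
            rw [Fin.succAbove_of_castSucc_lt] <;> simp, Fin.succ_zero_eq_one, hA10]
      have hBsub : B.submatrix ((0 : Fin (n+1)).succAbove) Fin.succ
          = Matrix.charmatrix (Kmat n) := by
        rw [Fin.succAbove_zero, hB, Matrix.submatrix_submatrix]
        refine Matrix.ext fun i j => ?_
        have hj : ((1 : Fin (n+2)).succAbove j.succ) = j.succ.succ := by
          rw [Fin.succAbove_of_le_castSucc]
          simp [Fin.le_castSucc_iff, Fin.lt_def, Fin.le_def]
        rw [Matrix.submatrix_apply, Function.comp_apply, Function.comp_apply, hj]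
        calc A i.succ.succ j.succ.succ
            = ((A.submatrix Fin.succ Fin.succ).submatrix Fin.succ Fin.succ) i j := rfl
          _ = Matrix.charmatrix (Kmat n) i j := by rw [hsub1, charK_sub]
      have hdetB : B.det = -Spoly n := by
        rw [Matrix.det_succ_column_zero, Fin.sum_univ_succ]
        simp only [hBcol, mul_zero, zero_mul, Finset.sum_const_zero, add_zero,
          hB00, hBsub, Fin.val_zero, pow_zero, one_mul]
        rw [show (Matrix.charmatrix (Kmat n)).det = (Kmat n).charpoly from rfl,
          ih n (by omega)]
        ring
      rw [Matrix.det_succ_row_zero, Fin.sum_univ_succ, Fin.sum_univ_succ]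
      simp only [hrow0, mul_zero, zero_mul, Finset.sum_const_zero, add_zero,
        Fin.succ_zero_eq_one, hA00, hA01, Fin.val_zero, Fin.val_one, pow_zero, pow_one,
        one_mul, Fin.succAbove_zero]
      rw [hsub1, show (Matrix.charmatrix (Kmat (n+1))).det = (Kmat (n+1)).charpoly from rfl,
        ih (n+1) (by omega), ← hB, hdetB,
        show Spoly (n+2) = X * Spoly (n+1) - Spoly n from rfl]
      ring

lemma Spoly_key (k' q r : ℕ) :
    Spoly (k'+1) ∣ Spoly (r + q * (k'+2)) - (-Spoly k')^q * Spoly r := by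
  induction q with
  | zero => simp
  | succ q ih =>
    have hidx : r + (q+1) * (k'+2) = k' + (r + q*(k'+2)) + 2 := by ring
    rw [hidx, Spoly_add]
    obtain ⟨t, ht⟩ := ih
    have hm : Spoly (r + q*(k'+2)) = (-Spoly k')^q * Spoly r + Spoly (k'+1) * t := by
      rw [← ht]; ring
    rw [hm]
    exact ⟨Spoly (r + q*(k'+2) + 1) - Spoly k' * t, by ring⟩

lemma Spoly_dvd_iff (k l : ℕ) (hk : 0 < k) :
    Spoly k ∣ Spoly l ↔ l % (k+1) = k := by
  obtain ⟨k', rfl⟩ : ∃ k', k = k'+1 := ⟨k-1, by omega⟩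
  have hr : l % (k'+2) < k'+2 := Nat.mod_lt _ (by omega)
  have key := Spoly_key k' (l / (k'+2)) (l % (k'+2))
  rw [Nat.mod_add_div' l (k'+2)] at key
  have hcop : IsCoprime (Spoly (k'+1)) ((-Spoly k')^(l / (k'+2))) :=
    ((Spoly_coprime k').neg_right).pow_right
  constructor
  · intro h
    have h2 : Spoly (k'+1) ∣ (-Spoly k')^(l / (k'+2)) * Spoly (l % (k'+2)) := by
      simpa using dvd_sub h key
    have h3 : Spoly (k'+1) ∣ Spoly (l % (k'+2)) := hcop.dvd_of_dvd_mul_left h2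
    by_contra hne
    have hne' : l % (k' + 2) ≠ k' + 1 := hne
    have hd := Polynomial.natDegree_le_of_dvd h3 (Spoly_ne_zero _)
    rw [(Spoly_monic _).2, (Spoly_monic _).2] at hd
    omega
  · intro h
    have h2 : Spoly (k'+1) ∣ (-Spoly k')^(l / (k'+2)) * Spoly (l % (k'+2)) := by
      rw [h]; exact dvd_mul_left _ _
    simpa using dvd_add key h2

theorem stmt5 (k l : ℕ) (hk : 0 < k) (hkl : k < l) :
    (Kmat k).charpoly ∣ (Kmat l).charpoly ↔ (k + 1) ∣ (l + 1) := by
  rw [charpoly_Kmat, charpoly_Kmat, Spoly_dvd_iff k l hk]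
  constructor
  · intro h
    refine ⟨l / (k+1) + 1, ?_⟩
    have := Nat.mod_add_div l (k+1)
    rw [Nat.mul_add, Nat.mul_one]
    omega
  · rintro ⟨m, hm⟩
    match m, hm with
    | (m'+1), hm =>
      rw [Nat.mul_succ] at hm
      rw [show l = (k+1) * m' + k by omega, Nat.mul_add_mod]
      exact Nat.mod_eq_of_lt (by omega)
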